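/- arXiv:2407.14336 — 2 statements merged into one kernel-verified Lean document; each statement's English description precedes it below -/
import Mathlib

section
/- Let T be a tree on a vertex set V and let u, v ∈ V be distinct vertices with deg_T(v) ≥ 2. Then there exists a tree T' on V such that deg_{T'}(u) = deg_T(u) + 1, deg_{T'}(v) = deg_T(v) − 1, and deg_{T'}(w) = deg_T(w) for all w ∈ V \ {u, v}. -/
/-- Degree of a vertex `v` in a simple graph `G` on a finite vertex set. -/
noncomputable def deg {V : Type*} [Fintype V] (G : SimpleGraph V) (v : V) : ℕ :=
  letI := Classical.decEq V
  letI := Classical.decRel G.Adj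
  G.degree v

/-- The degree sequence of a graph on `Fin N`, arranged in decreasing order. -/
noncomputable def degSeq {N : ℕ} (G : SimpleGraph (Fin N)) : List ℕ :=
  ((Finset.univ.val.map (deg G)).sort (· ≤ ·)).reverse

/-- Generalized (prefix-sum) majorization: `X ≼ Y`. -/
def Maj (X Y : List ℕ) : Prop := ∀ j : ℕ, (X.take j).sum ≤ (Y.take j).sum

/-- A basic tree transfer: choose an edge `{v,w}` with `deg v ≥ 2` and a vertex `u ≠ v` with
`deg u ≥ deg v` lying in the same connected component as `v` after deleting the edge `{v,w}`;
delete the edge `{v,w}` and add the edge `{u,w}`. -/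
def BasicTreeTransfer {V : Type*} [Fintype V] (T T' : SimpleGraph V) : Prop :=
  ∃ v w u : V, T.Adj v w ∧ 2 ≤ deg T v ∧ u ≠ v ∧ deg T v ≤ deg T u ∧
    (T.deleteEdges {s(v, w)}).Reachable u v ∧
    T' = (T.deleteEdges {s(v, w)}) ⊔ SimpleGraph.fromEdgeSet {s(u, w)}

/-- The decreasing rearrangement of a list of naturals. -/
noncomputable def sortDesc (l : List ℕ) : List ℕ :=
  (Multiset.sort (↑l : Multiset ℕ) (· ≤ ·)).reverse

/-- A path (chain) graph: a tree in which every vertex has degree at most 2. -/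
def IsPathGraph {V : Type*} [Fintype V] (G : SimpleGraph V) : Prop :=
  G.IsTree ∧ ∀ v, deg G v ≤ 2

/-- The degree sequence of the chain on `N ≥ 2` vertices: `(2,…,2,1,1)`. -/
def chainSeq (N : ℕ) : List ℕ := List.replicate (N - 2) 2 ++ List.replicate 2 1

/-- A basic transfer on a decreasing list: add 1 to entry `i`, subtract 1 from entry `j ≥ 1`,
and rearrange in decreasing order. -/
def BasicTransfer (X Y : List ℕ) : Prop :=
  ∃ i j : ℕ, i < X.length ∧ j < X.length ∧ i ≠ j ∧ 1 ≤ X.getD j 0 ∧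
    Y = sortDesc ((X.set i (X.getD i 0 + 1)).set j (X.getD j 0 - 1))

lemma deg_eq_ncard' {V : Type*} [Fintype V] (G : SimpleGraph V) (x : V) :
    deg G x = (G.neighborSet x).ncard := by
  classical
  unfold deg
  rw [SimpleGraph.degree, ← Set.ncard_coe_finset]
  congr 1
  ext y
  simp

/-- given a tree `T` on `V` and distinct vertices `u, v` with `deg v ≥ 2`,
there is a tree `T'` on `V` raising the degree of `u` by one, lowering that of `v` by one,
and keeping all other degrees. -/
theorem stmt_3 {V : Type*} [Fintype V] (T : SimpleGraph V) (hT : T.IsTree)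
    (u v : V) (huv : u ≠ v) (hv : 2 ≤ deg T v) :
    ∃ T' : SimpleGraph V, T'.IsTree ∧ deg T' u = deg T u + 1 ∧
      deg T' v = deg T v - 1 ∧ ∀ w, w ≠ u → w ≠ v → deg T' w = deg T w := by
  classical
  obtain ⟨p, hp, hpuniq⟩ := hT.existsUnique_path v u
  obtain ⟨x, hvx, q, rfl⟩ := (SimpleGraph.Walk.not_nil_iff).mp
    (SimpleGraph.Walk.not_nil_of_ne (fun h => huv h.symm) (p := p))
  have hq : q.IsPath := (SimpleGraph.Walk.cons_isPath_iff _ _).mp hp |>.1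
  have hvnq : v ∉ q.support := ((SimpleGraph.Walk.cons_isPath_iff _ _).mp hp).2
  -- choose a neighbor w of v different from x
  have hcard : 1 < (T.neighborSet v).ncard := by
    rw [← deg_eq_ncard']; omega
  obtain ⟨w, hw, hwx⟩ := Set.exists_ne_of_one_lt_ncard hcard x
  have hvw : T.Adj v w := hw
  have hwv : w ≠ v := hvw.ne'
  -- u ≠ w
  have hune_w : u ≠ w := by
    rintro rfl
    have hadj : T.Adj v u := hvw
    have hr : (SimpleGraph.Walk.cons hadj SimpleGraph.Walk.nil).IsPath := by
      simp [SimpleGraph.Walk.cons_isPath_iff, huv.symm]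
    have := hpuniq _ hr
    have h1 := congrArg (fun r => SimpleGraph.Walk.getVert r 1) this
    simp only [SimpleGraph.Walk.getVert_cons_succ, SimpleGraph.Walk.getVert_zero] at h1
    exact hwx h1
  -- u not adjacent to w
  have hnadj : ¬ T.Adj u w := by
    intro h
    have hr : (SimpleGraph.Walk.cons hvw
        (SimpleGraph.Walk.cons h.symm SimpleGraph.Walk.nil)).IsPath := by
      simp [SimpleGraph.Walk.cons_isPath_iff, hune_w.symm, huv.symm, hwv, hvw.ne]
    have := hpuniq _ hr
    have h1 := congrArg (fun r => SimpleGraph.Walk.getVert r 1) this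
    simp only [SimpleGraph.Walk.getVert_cons_succ, SimpleGraph.Walk.getVert_zero] at h1
    exact hwx h1
  -- the path from v to u avoids the edge s(v,w)
  have havoid : ∀ e ∈ (SimpleGraph.Walk.cons hvx q).edges, e ∉ ({s(v, w)} : Set (Sym2 V)) := by
    intro e he
    simp only [Set.mem_singleton_iff]
    rintro rfl
    rw [SimpleGraph.Walk.edges_cons] at he
    rcases List.mem_cons.mp he with h | h
    · rcases Sym2.eq_iff.mp h with ⟨-, h2⟩ | ⟨h1, -⟩
      · exact hwx h2
      · exact hvx.ne h1
    · exact hvnq (SimpleGraph.Walk.fst_mem_support_of_mem_edges q h)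
  have hreach : (T.deleteEdges {s(v, w)}).Reachable v u :=
    ⟨(SimpleGraph.Walk.cons hvx q).toDeleteEdges _ havoid⟩
  have hbridge : ¬ (T.deleteEdges {s(v, w)}).Reachable v w :=
    ((SimpleGraph.isBridge_iff).mp
      (SimpleGraph.isAcyclic_iff_forall_adj_isBridge.mp hT.IsAcyclic hvw))
  set T' : SimpleGraph V := T.deleteEdges {s(v, w)} ⊔ SimpleGraph.fromEdgeSet {s(u, w)} with hT'
  have hT'adj : ∀ a b : V, T'.Adj a b ↔ (T.Adj a b ∧ s(a, b) ≠ s(v, w)) ∨ s(a, b) = s(u, w) := by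
    intro a b
    simp only [hT', SimpleGraph.sup_adj, SimpleGraph.deleteEdges_adj, Set.mem_singleton_iff,
      SimpleGraph.fromEdgeSet_adj]
    constructor
    · rintro (⟨h1, h2⟩ | ⟨h1, -⟩)
      · exact Or.inl ⟨h1, h2⟩
      · exact Or.inr h1
    · rintro (⟨h1, h2⟩ | h1)
      · exact Or.inl ⟨h1, h2⟩
      · refine Or.inr ⟨h1, ?_⟩
        rcases Sym2.eq_iff.mp h1 with ⟨rfl, rfl⟩ | ⟨rfl, rfl⟩
        · exact hune_w
        · exact fun h => hune_w h.symm
  -- reachability of v and w in T'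
  have hvwT' : T'.Reachable v w := by
    have h1 : T'.Reachable v u := hreach.mono le_sup_left
    have h2 : T'.Adj u w := (hT'adj u w).mpr (Or.inr rfl)
    exact h1.trans h2.reachable
  have hstep : ∀ a b : V, T.Adj a b → T'.Reachable a b := by
    intro a b hab
    by_cases he : s(a, b) = s(v, w)
    · rcases Sym2.eq_iff.mp he with ⟨rfl, rfl⟩ | ⟨rfl, rfl⟩
      · exact hvwT'
      · exact hvwT'.symm
    · exact ((hT'adj a b).mpr (Or.inl ⟨hab, he⟩)).reachable
  have hconn : T'.Connected := by
    rw [SimpleGraph.connected_iff]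
    refine ⟨?_, hT.isConnected.nonempty⟩
    intro a b
    obtain ⟨wk⟩ := hT.isConnected.preconnected a b
    induction wk with
    | nil => exact SimpleGraph.Reachable.refl _
    | cons h q ih => exact (hstep _ _ h).trans ih
  have hacyc : T'.IsAcyclic := by
    intro a c hc
    by_cases he : s(u, w) ∈ c.edges
    · have hkey : T'.Adj u w ∧ (T' \ SimpleGraph.fromEdgeSet {s(u, w)}).Reachable u w :=
        SimpleGraph.adj_and_reachable_delete_edges_iff_exists_cycle.mpr ⟨a, c, hc, he⟩
      have hle : T' \ SimpleGraph.fromEdgeSet {s(u, w)} ≤ T.deleteEdges {s(v, w)} := by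
        intro a' b' hab
        rw [SimpleGraph.sdiff_adj] at hab
        obtain ⟨h1, h2⟩ := hab
        rcases (hT'adj a' b').mp h1 with ⟨h3, h4⟩ | h3
        · exact (SimpleGraph.deleteEdges_adj).mpr ⟨h3, by simpa using h4⟩
        · refine absurd ?_ h2
          simp only [SimpleGraph.fromEdgeSet_adj, Set.mem_singleton_iff]
          exact ⟨h3, h1.ne⟩
      exact hbridge (hreach.trans (hkey.2.mono hle))
    · have hedges : ∀ e ∈ c.edges, e ∈ T.edgeSet := by
        intro e hec
        have hT'e : e ∈ T'.edgeSet := c.edges_subset_edgeSet hec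
        induction e using Sym2.ind with
        | _ a' b' =>
          rw [SimpleGraph.mem_edgeSet] at hT'e ⊢
          rcases (hT'adj a' b').mp hT'e with ⟨h3, -⟩ | h3
          · exact h3
          · exact absurd (h3 ▸ hec) he
      exact hT.IsAcyclic (c.transfer T hedges) (hc.transfer hedges)
  -- neighbor sets
  have hNu : T'.neighborSet u = insert w (T.neighborSet u) := by
    ext y
    simp only [SimpleGraph.mem_neighborSet, hT'adj, Set.mem_insert_iff]
    constructor
    · rintro (⟨h1, -⟩ | h1)
      · exact Or.inr h1
      · rcases Sym2.eq_iff.mp h1 with ⟨-, rfl⟩ | ⟨h2, -⟩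
        · exact Or.inl rfl
        · exact absurd h2 hune_w
    · rintro (rfl | h1)
      · exact Or.inr rfl
      · refine Or.inl ⟨h1, ?_⟩
        intro h2
        rcases Sym2.eq_iff.mp h2 with ⟨h3, -⟩ | ⟨h4, -⟩
        · exact huv h3
        · exact hune_w h4
  have hNv : T'.neighborSet v = T.neighborSet v \ {w} := by
    ext y
    simp only [SimpleGraph.mem_neighborSet, hT'adj, Set.mem_diff, Set.mem_singleton_iff]
    constructor
    · rintro (⟨h1, h2⟩ | h1)
      · refine ⟨h1, ?_⟩
        rintro rfl
        exact h2 rfl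
      · rcases Sym2.eq_iff.mp h1 with ⟨h2, -⟩ | ⟨h2, -⟩
        · exact absurd h2.symm huv
        · exact absurd h2.symm hwv
    · rintro ⟨h1, h2⟩
      refine Or.inl ⟨h1, ?_⟩
      intro h3
      rcases Sym2.eq_iff.mp h3 with ⟨-, h4⟩ | ⟨h4, -⟩
      · exact h2 h4
      · exact hvw.ne h4
  have hNw : T'.neighborSet w = insert u (T.neighborSet w \ {v}) := by
    ext y
    simp only [SimpleGraph.mem_neighborSet, hT'adj, Set.mem_insert_iff, Set.mem_diff,
      Set.mem_singleton_iff]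
    constructor
    · rintro (⟨h1, h2⟩ | h1)
      · refine Or.inr ⟨h1, ?_⟩
        rintro rfl
        exact h2 (Sym2.eq_swap)
      · rcases Sym2.eq_iff.mp h1 with ⟨h2, -⟩ | ⟨-, h2⟩
        · exact absurd h2.symm hune_w
        · exact Or.inl h2
    · rintro (rfl | ⟨h1, h2⟩)
      · exact Or.inr Sym2.eq_swap
      · refine Or.inl ⟨h1, ?_⟩
        intro h3
        rcases Sym2.eq_iff.mp h3 with ⟨h4, -⟩ | ⟨-, h4⟩
        · exact hwv h4
        · exact h2 h4
  have hNother : ∀ z, z ≠ u → z ≠ v → z ≠ w → T'.neighborSet z = T.neighborSet z := by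
    intro z hzu hzv hzw
    ext y
    simp only [SimpleGraph.mem_neighborSet, hT'adj]
    constructor
    · rintro (⟨h1, -⟩ | h1)
      · exact h1
      · rcases Sym2.eq_iff.mp h1 with ⟨h2, -⟩ | ⟨h2, -⟩
        · exact absurd h2 hzu
        · exact absurd h2 hzw
    · intro h1
      refine Or.inl ⟨h1, ?_⟩
      intro h2
      rcases Sym2.eq_iff.mp h2 with ⟨h3, -⟩ | ⟨h3, -⟩
      · exact hzv h3
      · exact hzw h3
  refine ⟨T', ⟨hconn, hacyc⟩, ?_, ?_, ?_⟩
  · rw [deg_eq_ncard', deg_eq_ncard', hNu,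
      Set.ncard_insert_of_notMem (by simpa using hnadj) (Set.toFinite _)]
  · rw [deg_eq_ncard', deg_eq_ncard', hNv,
      Set.ncard_diff_singleton_of_mem hw]
  · intro z hzu hzv
    by_cases hzw : z = w
    · subst hzw
      rw [deg_eq_ncard', deg_eq_ncard', hNw,
        Set.ncard_insert_of_notMem (fun hmem => hnadj hmem.1.symm) (Set.toFinite _),
        Set.ncard_diff_singleton_add_one (by simpa using hvw.symm) (Set.toFinite _)]
    · rw [deg_eq_ncard', deg_eq_ncard', hNother z hzu hzv hzw]
end

section
/- Let N ≥ 2, let Δ_C be the degree sequence of the path (chain) on N vertices, and let T be any tree on N vertices. Then Δ_C ≼ Δ_T, with Δ_C = Δ_T if and only if T is a path. -/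
/- ---------------- auxiliary lemmas ---------------- -/

lemma deg_eq {V : Type*} [Fintype V] [DecidableEq V] (G : SimpleGraph V) [DecidableRel G.Adj]
    (v : V) : deg G v = G.degree v := by
  unfold deg; congr!

lemma degSeq_coe {N : ℕ} (T : SimpleGraph (Fin N)) :
    (↑(degSeq T) : Multiset ℕ) = Finset.univ.val.map (deg T) := by
  unfold degSeq; rw [Multiset.coe_reverse, Multiset.sort_eq]

lemma degSeq_sorted {N : ℕ} (T : SimpleGraph (Fin N)) : (degSeq T).Pairwise (· ≥ ·) := by
  unfold degSeq
  have := Multiset.pairwise_sort (r := (· ≤ ·)) (s := Finset.univ.val.map (deg T))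
  simpa [List.pairwise_reverse, flip] using this

lemma degSeq_length {N : ℕ} (T : SimpleGraph (Fin N)) : (degSeq T).length = N := by
  have : ((degSeq T : Multiset ℕ)).card = N := by rw [degSeq_coe]; simp
  simpa using this

lemma deg_sum {N : ℕ} (hN : 2 ≤ N) (T : SimpleGraph (Fin N)) (hT : T.IsTree) :
    (Finset.univ.val.map (deg T)).sum = 2 * N - 2 := by
  classical
  have h1 : ∑ v, T.degree v = 2 * T.edgeFinset.card := T.sum_degrees_eq_twice_card_edges
  have h2 : T.edgeFinset.card + 1 = N := by simpa using hT.card_edgeFinset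
  have h3 : (Finset.univ.val.map (deg T)).sum = ∑ v, T.degree v := by
    rw [Finset.sum]; congr 1
  omega

lemma deg_pos {N : ℕ} (hN : 2 ≤ N) (T : SimpleGraph (Fin N)) (hT : T.IsTree) (v : Fin N) :
    1 ≤ deg T v := by
  classical
  rw [deg_eq]
  rw [Nat.one_le_iff_ne_zero, ← Nat.pos_iff_ne_zero, T.degree_pos_iff_exists_adj]
  obtain ⟨w, hw⟩ := Fintype.exists_ne_of_one_lt_card (by simp; omega) v
  obtain ⟨p⟩ := hT.isConnected.preconnected v w
  exact ⟨p.getVert 1, p.adj_snd (SimpleGraph.Walk.not_nil_of_ne hw.symm)⟩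

lemma chain_take (N j : ℕ) :
    ((chainSeq N).take j).sum = 2 * min j (N - 2) + min (j - (N - 2)) 2 := by
  unfold chainSeq
  rw [List.take_append, List.sum_append, List.take_replicate,
    List.take_replicate, List.sum_replicate, List.sum_replicate, List.length_replicate]
  simp [mul_comm]

lemma chain_length {N : ℕ} (hN : 2 ≤ N) : (chainSeq N).length = N := by
  simp [chainSeq]; omega

lemma chain_sorted (N : ℕ) : (chainSeq N).Pairwise (· ≥ ·) := by
  unfold chainSeq
  rw [List.pairwise_append]
  refine ⟨?_, ?_, ?_⟩ <;>
    simp [List.pairwise_replicate, List.mem_replicate] <;> omega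

lemma maj_aux {N : ℕ} (hN : 2 ≤ N) (L : List ℕ) (hs : L.Pairwise (· ≥ ·))
    (hlen : L.length = N) (hpos : ∀ x ∈ L, 1 ≤ x) (hsum : L.sum = 2 * N - 2) (j : ℕ) :
    ((chainSeq N).take j).sum ≤ (L.take j).sum := by
  rw [chain_take N j]
  rcases le_or_gt N j with hj | hj
  · rw [List.take_of_length_le (by omega)]
    omega
  · have hjL : j < L.length := by omega
    rcases le_or_gt 2 L[j] with ha | ha
    · have h2 : ∀ x ∈ L.take j, 2 ≤ x := by
        intro x hx
        rw [List.mem_iff_getElem] at hx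
        obtain ⟨i, hi, rfl⟩ := hx
        rw [List.getElem_take]
        have hi' : i < j := by simp at hi; omega
        rcases eq_or_lt_of_le (Nat.le_of_lt_succ (Nat.lt_succ_of_lt hi')) with h | h
        · exact le_trans ha (le_of_eq (by congr 1; omega))
        · exact le_trans ha (List.pairwise_iff_getElem.mp hs i j (by omega) hjL hi')
      have := List.card_nsmul_le_sum (L.take j) 2 h2
      rw [smul_eq_mul, List.length_take] at this
      omega
    · have h1 : ∀ x ∈ L.drop j, x = 1 := by
        intro x hx
        rw [List.mem_iff_getElem] at hx
        obtain ⟨i, hi, rfl⟩ := hx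
        rw [List.getElem_drop]
        have hji : j + i < L.length := by simp [List.length_drop] at hi; omega
        have hle : L[j + i] ≤ L[j] := by
          rcases Nat.eq_zero_or_pos i with rfl | hip
          · simp
          · exact List.pairwise_iff_getElem.mp hs j (j + i) hjL hji (by omega)
        have := hpos L[j + i] (List.getElem_mem _)
        omega
      have hds : (L.drop j).sum = N - j := by
        rw [List.sum_eq_card_nsmul _ 1 h1]
        simp [List.length_drop, hlen]
      have hsplit : (L.take j).sum + (L.drop j).sum = L.sum := by
        rw [← List.sum_append, List.take_append_drop]
      omega

lemma multiset_eq_of_mem_one_two {M : Multiset ℕ} (h12 : ∀ x ∈ M, x = 1 ∨ x = 2) :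
    M = Multiset.replicate (M.count 2) 2 + Multiset.replicate (M.count 1) 1 := by
  ext n
  rw [Multiset.count_add, Multiset.count_replicate, Multiset.count_replicate]
  by_cases h1 : n = 1 <;> by_cases h2 : n = 2
  · omega
  · simp_all
  · simp_all
  · rw [if_neg (by omega : ¬(2:ℕ) = n), if_neg (by omega : ¬(1:ℕ) = n), add_zero]
    rw [Multiset.count_eq_zero_of_notMem]
    intro hm
    rcases h12 n hm with rfl | rfl <;> simp_all

lemma chain_coe {N : ℕ} (hN : 2 ≤ N) :
    (↑(chainSeq N) : Multiset ℕ)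
      = Multiset.replicate (N - 2) 2 + Multiset.replicate 2 1 := by
  unfold chainSeq
  rw [← Multiset.coe_add]
  rw [Multiset.coe_replicate, Multiset.coe_replicate]

/-- the degree sequence of the chain on `N` vertices is majorized by the degree
sequence of any tree `T` on `N` vertices, with equality if and only if `T` is a path. -/
theorem stmt_7 {N : ℕ} (hN : 2 ≤ N) (T : SimpleGraph (Fin N)) (hT : T.IsTree) :
    Maj (chainSeq N) (degSeq T) ∧ (chainSeq N = degSeq T ↔ IsPathGraph T) := by
  have hM := degSeq_coe T
  have hlen := degSeq_length T
  have hsorted := degSeq_sorted T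
  have hsum : (degSeq T).sum = 2 * N - 2 := by
    have := deg_sum hN T hT
    rw [← hM] at this
    simpa using this
  have hpos : ∀ x ∈ degSeq T, 1 ≤ x := by
    intro x hx
    have hx' : x ∈ (↑(degSeq T) : Multiset ℕ) := by simpa using hx
    rw [hM] at hx'
    obtain ⟨v, -, rfl⟩ := Multiset.mem_map.mp hx'
    exact deg_pos hN T hT v
  haveI : Std.Antisymm (α := ℕ) (· ≥ ·) := ⟨fun a b h1 h2 => le_antisymm h2 h1⟩
  constructor
  · intro j
    exact maj_aux hN _ hsorted hlen hpos hsum j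
  · constructor
    · intro h
      refine ⟨hT, fun v => ?_⟩
      have hv : deg T v ∈ (↑(chainSeq N) : Multiset ℕ) := by
        rw [h, hM]
        exact Multiset.mem_map.mpr ⟨v, by simp, rfl⟩
      have hv' : deg T v ∈ chainSeq N := by simpa using hv
      simp [chainSeq, List.mem_append, List.mem_replicate] at hv'
      omega
    · rintro ⟨-, h2⟩
      refine List.Perm.eq_of_pairwise' (chain_sorted N) hsorted ?_
      rw [← Multiset.coe_eq_coe, hM, chain_coe hN]
      set M := Finset.univ.val.map (deg T) with hMdef
      have h12 : ∀ x ∈ M, x = 1 ∨ x = 2 := by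
        intro x hx
        obtain ⟨v, -, rfl⟩ := Multiset.mem_map.mp hx
        have := deg_pos hN T hT v
        have := h2 v
        omega
      have heq := multiset_eq_of_mem_one_two h12
      have hcard : M.card = N := by simp [hMdef]
      have hsumM : M.sum = 2 * N - 2 := deg_sum hN T hT
      rw [heq] at hcard hsumM
      simp [Multiset.card_add, Multiset.card_replicate, Multiset.sum_replicate] at hcard hsumM
      have hc2 : M.count 2 = N - 2 := by omega
      have hc1 : M.count 1 = 2 := by omega
      rw [heq, hc1, hc2]
end
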